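/- Suppose φ(X_1),...,φ(X_N) are linearly independent elements of a Hilbert space, λ > 0, and the attention-parameterized vector β = Σ_j (v_j/h(X_j))φ(X_j) globally minimizes the penalized hinge loss (λ/2)‖β‖² + Σ_i [1 − W_i(⟨β,φ(X_i)⟩+β₀)]₊. Let α* be the optimal solution of the corresponding dual SVM. Then for every j, λv_j/h(X_j) = α*_j W_j, i.e., the optimal balancing weight can be read off as α*_j = λ v_j/(h(X_j) W_j). -/

import Mathlib

open RealInnerProductSpace Filter Topology

private lemma gram_surj' {H : Type*} [NormedAddCommGroup H] [InnerProductSpace ℝ H] {N : ℕ}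
    {x : Fin N → H} (hli : LinearIndependent ℝ x) (w : Fin N → ℝ) :
    ∃ d : H, ∀ i, ⟪d, x i⟫ = w i := by
  classical
  let T : (Fin N → ℝ) →ₗ[ℝ] (Fin N → ℝ) :=
    { toFun := fun c i => ⟪∑ j, c j • x j, x i⟫
      map_add' := by
        intro c c'; funext i
        simp [add_smul, Finset.sum_add_distrib, inner_add_left]
      map_smul' := by
        intro r c; funext i
        simp [mul_smul, ← Finset.smul_sum, real_inner_smul_left] }
  have hinj : Function.Injective T := by
    rw [← LinearMap.ker_eq_bot, LinearMap.ker_eq_bot']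
    intro c hc
    have hz : (∑ j, c j • x j) = 0 := by
      have h1 : ⟪∑ j, c j • x j, ∑ j, c j • x j⟫ = 0 := by
        rw [inner_sum]
        apply Finset.sum_eq_zero
        intro i _
        have hci : T c i = 0 := by rw [hc]; rfl
        have : ⟪∑ j, c j • x j, x i⟫ = 0 := hci
        rw [real_inner_smul_right, this, mul_zero]
      exact inner_self_eq_zero.mp h1
    have := Fintype.linearIndependent_iff.mp hli c hz
    funext i; exact this i
  obtain ⟨c, hc⟩ := (LinearMap.injective_iff_surjective.mp hinj) w
  exact ⟨∑ j, c j • x j, fun i => by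
    have : T c i = w i := by rw [hc]
    exact this⟩

set_option maxHeartbeats 1000000

/-- if `φ(X_1), ..., φ(X_N)` are linearly independent, `λ > 0`, and the
attention-parameterized vector `β = ∑ⱼ (vⱼ/h(Xⱼ)) φ(Xⱼ)` globally minimizes the penalized
hinge loss, then the optimal dual SVM solution `α*` satisfies
`λ vⱼ / h(Xⱼ) = α*ⱼ Wⱼ` for every `j`. -/
theorem stmt_9 {H : Type*} [NormedAddCommGroup H] [InnerProductSpace ℝ H] {N : ℕ}
    (lam : ℝ) (hlam : 0 < lam) (W v h : Fin N → ℝ)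
    (hW : ∀ j, W j = 1 ∨ W j = -1) (hh : ∀ j, 0 < h j)
    (x : Fin N → H) (hli : LinearIndependent ℝ x) (β₀ : ℝ)
    -- β = ∑ⱼ (vⱼ/h(Xⱼ)) φ(Xⱼ) globally minimizes the penalized hinge loss
    (hmin : ∀ (β' : H) (β₀' : ℝ),
      lam / 2 * ‖∑ j, (v j / h j) • x j‖ ^ 2
          + ∑ i, max 0 (1 - W i * (⟪∑ j, (v j / h j) • x j, x i⟫ + β₀))
        ≤ lam / 2 * ‖β'‖ ^ 2 + ∑ i, max 0 (1 - W i * (⟪β', x i⟫ + β₀')))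
    -- α* is an optimal solution of the corresponding dual SVM
    (αs : Fin N → ℝ)
    (hfeas : (∑ i, W i * αs i = 0) ∧ ∀ i, 0 ≤ αs i ∧ αs i ≤ 1)
    (hopt : ∀ α : Fin N → ℝ, (∑ i, W i * α i = 0) → (∀ i, 0 ≤ α i ∧ α i ≤ 1) →
      (∑ i, ∑ j, αs i * (W i * W j * ⟪x i, x j⟫) * αs j) - 2 * lam * ∑ i, αs i
        ≤ (∑ i, ∑ j, α i * (W i * W j * ⟪x i, x j⟫) * α j) - 2 * lam * ∑ i, α i) :
    ∀ j, lam * v j / h j = αs j * W j := by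
  classical
  set β : H := ∑ j, (v j / h j) • x j with hβdef
  have hW2 : ∀ j, W j * W j = 1 := by
    intro j; rcases hW j with h1 | h1 <;> rw [h1] <;> norm_num
  set m : Fin N → ℝ := fun i => W i * (⟪β, x i⟫ + β₀) with hmdef
  set α : Fin N → ℝ := fun j => lam * v j / h j * W j with hαdef
  have hαW : ∀ j, α j * W j = lam * v j / h j := by
    intro j
    simp only [hαdef]
    rw [mul_assoc, hW2 j, mul_one]
  -- KEY directional inequality
  have key : ∀ (a : Fin N → ℝ) (d₀ : ℝ),
      0 ≤ (∑ j, α j * a j) - d₀ * (∑ j, α j * W j)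
        + ∑ i, (if m i < 1 then -a i else if m i = 1 then max 0 (-a i) else 0) := by
    intro a d₀
    obtain ⟨d, hd⟩ := gram_surj' hli (fun i => W i * a i - d₀)
    have had : ∀ i, W i * (⟪d, x i⟫ + d₀) = a i := by
      intro i; rw [hd i]
      linear_combination (a i) * hW2 i
    have hβd : lam * ⟪β, d⟫ = (∑ j, α j * a j) - d₀ * (∑ j, α j * W j) := by
      rw [hβdef, sum_inner, Finset.mul_sum, Finset.mul_sum, ← Finset.sum_sub_distrib]
      apply Finset.sum_congr rfl
      intro j _
      rw [real_inner_smul_left, real_inner_comm, hd j]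
      simp only [hαdef]
      have hne : h j ≠ 0 := (hh j).ne'
      field_simp
      ring_nf
      linear_combination (d₀ * v j) * hW2 j
    rw [← hβd]
    -- quadratic inequality for each t, from primal optimality
    have hstep : ∀ t : ℝ, 0 ≤ t * (lam * ⟪β, d⟫) + t ^ 2 * (lam / 2 * ‖d‖ ^ 2)
        + ∑ i, (max 0 (1 - m i - t * a i) - max 0 (1 - m i)) := by
      intro t
      have h1 := hmin (β + t • d) (β₀ + t * d₀)
      have hnorm : ‖β + t • d‖ ^ 2 = ‖β‖ ^ 2 + 2 * t * ⟪β, d⟫ + t ^ 2 * ‖d‖ ^ 2 := by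
        rw [@norm_add_sq_real, real_inner_smul_right, norm_smul]
        simp [mul_pow, sq_abs]; ring
      have hin : ∀ i, W i * (⟪β + t • d, x i⟫ + (β₀ + t * d₀)) = m i + t * a i := by
        intro i
        rw [inner_add_left, real_inner_smul_left]
        simp only [hmdef]
        linear_combination t * (had i)
      rw [hnorm] at h1
      simp only [hin] at h1
      have hsub : ∑ i, (max 0 (1 - m i - t * a i) - max 0 (1 - m i))
          = (∑ i, max 0 (1 - (m i + t * a i))) - ∑ i, max 0 (1 - m i) := by
        rw [Finset.sum_sub_distrib]
        congr 1
        apply Finset.sum_congr rfl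
        intro i _
        congr 1
        ring
      have hLHS : ∑ i, max 0 (1 - W i * (⟪β, x i⟫ + β₀)) = ∑ i, max 0 (1 - m i) := by
        apply Finset.sum_congr rfl; intro i _; simp [hmdef]
      rw [hLHS] at h1
      rw [hsub]
      nlinarith [h1]
    -- eventually-linearization
    set D : Fin N → ℝ := fun i => if m i < 1 then -a i else if m i = 1 then max 0 (-a i) else 0
      with hDdef
    have hev : ∀ᶠ t in 𝓝[>] (0:ℝ), ∀ i,
        max 0 (1 - m i - t * a i) - max 0 (1 - m i) = t * D i := by
      rw [eventually_all]
      intro i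
      rcases lt_trichotomy (m i) 1 with hmi | hmi | hmi
      · have hpos : (0:ℝ) < 1 - m i := by linarith
        have ht : Tendsto (fun t : ℝ => 1 - m i - t * a i) (𝓝[>] (0:ℝ)) (𝓝 (1 - m i)) := by
          apply Filter.Tendsto.mono_left _ nhdsWithin_le_nhds
          have : Continuous (fun t : ℝ => 1 - m i - t * a i) :=
            continuous_const.sub ((continuous_id : Continuous (id : ℝ → ℝ)).mul continuous_const)
          simpa using this.tendsto (0:ℝ)
        filter_upwards [ht.eventually (eventually_gt_nhds hpos)] with t htp
        rw [max_eq_right htp.le, max_eq_right hpos.le]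
        simp only [hDdef, if_pos hmi]
        ring
      · filter_upwards [self_mem_nhdsWithin] with t htp
        have htp' : (0:ℝ) < t := htp
        simp only [hDdef, hmi]
        simp only [lt_irrefl, if_false, if_true]
        have h0 : (1:ℝ) - 1 - t * a i = t * (-a i) := by ring
        rw [h0]
        have h2 : t * max 0 (-a i) = max (t * 0) (t * (-a i)) := mul_max_of_nonneg _ _ htp'.le
        rw [h2, mul_zero]
        norm_num
      · have hneg : (1:ℝ) - m i < 0 := by linarith
        have ht : Tendsto (fun t : ℝ => 1 - m i - t * a i) (𝓝[>] (0:ℝ)) (𝓝 (1 - m i)) := by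
          apply Filter.Tendsto.mono_left _ nhdsWithin_le_nhds
          have : Continuous (fun t : ℝ => 1 - m i - t * a i) :=
            continuous_const.sub ((continuous_id : Continuous (id : ℝ → ℝ)).mul continuous_const)
          simpa using this.tendsto (0:ℝ)
        filter_upwards [ht.eventually (eventually_lt_nhds hneg)] with t htn
        rw [max_eq_left htn.le, max_eq_left hneg.le]
        simp only [hDdef, if_neg (by linarith : ¬ m i < 1), if_neg (by linarith : ¬ m i = 1)]
        ring
    have hev2 : ∀ᶠ t in 𝓝[>] (0:ℝ),
        0 ≤ (lam * ⟪β, d⟫ + ∑ i, D i) + t * (lam / 2 * ‖d‖ ^ 2) := by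
      filter_upwards [hev, self_mem_nhdsWithin] with t hteq htp
      have htp' : (0:ℝ) < t := htp
      have h3 := hstep t
      rw [Finset.sum_congr rfl (fun i _ => hteq i), ← Finset.mul_sum] at h3
      have h4 : 0 ≤ t * ((lam * ⟪β, d⟫ + ∑ i, D i) + t * (lam / 2 * ‖d‖ ^ 2)) := by
        nlinarith [h3]
      nlinarith [h4, htp']
    have hlim : Tendsto (fun t : ℝ => (lam * ⟪β, d⟫ + ∑ i, D i) + t * (lam / 2 * ‖d‖ ^ 2))
        (𝓝[>] (0:ℝ)) (𝓝 (lam * ⟪β, d⟫ + ∑ i, D i)) := by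
      apply Filter.Tendsto.mono_left _ nhdsWithin_le_nhds
      have : Continuous (fun t : ℝ => (lam * ⟪β, d⟫ + ∑ i, D i) + t * (lam / 2 * ‖d‖ ^ 2)) :=
        continuous_const.add ((continuous_id : Continuous (id : ℝ → ℝ)).mul continuous_const)
      simpa using this.tendsto (0:ℝ)
    have := ge_of_tendsto hlim hev2
    simpa [hDdef] using this
  -- equality constraint for α
  have hsum0 : ∑ j, α j * W j = 0 := by
    have h1 := key (fun _ => 0) 1
    have h2 := key (fun _ => 0) (-1)
    simp only [mul_zero, neg_zero, Finset.sum_const_zero, max_self, ite_self] at h1 h2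
    linarith
  -- pointwise consequences
  have hk : ∀ (k : Fin N) (t : ℝ),
      0 ≤ α k * t + (if m k < 1 then -t else if m k = 1 then max 0 (-t) else 0) := by
    intro k t
    have h1 := key (Pi.single k t) 0
    have hs1 : ∑ j, α j * (Pi.single k t : Fin N → ℝ) j = α k * t := by
      rw [Finset.sum_eq_single k]
      · rw [Pi.single_eq_same]
      · intro b _ hbk; rw [Pi.single_eq_of_ne hbk, mul_zero]
      · intro hk'; exact absurd (Finset.mem_univ k) hk'
    have hs2 : ∑ i, (if m i < 1 then -((Pi.single k t : Fin N → ℝ) i) else if m i = 1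
          then max 0 (-((Pi.single k t : Fin N → ℝ) i)) else 0)
        = (if m k < 1 then -t else if m k = 1 then max 0 (-t) else 0) := by
      rw [Finset.sum_eq_single k]
      · rw [Pi.single_eq_same]
      · intro b _ hbk
        rw [Pi.single_eq_of_ne hbk]
        simp
      · intro hk'; exact absurd (Finset.mem_univ k) hk'
    rw [hs1, hs2] at h1
    simpa using h1
  have hfacts : ∀ k, (0 ≤ α k ∧ α k ≤ 1) ∧ (m k < 1 → α k = 1) ∧ (1 < m k → α k = 0) := by
    intro k
    have hp := hk k 1
    have hn := hk k (-1)
    rcases lt_trichotomy (m k) 1 with hc | hc | hc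
    · rw [if_pos hc] at hp hn
      norm_num at hp hn
      exact ⟨⟨by linarith, by linarith⟩, fun _ => by linarith, fun h' => by linarith⟩
    · rw [if_neg (by rw [hc]; exact lt_irrefl 1), if_pos hc] at hp hn
      norm_num at hp hn
      exact ⟨⟨by linarith, by linarith⟩, fun h' => by rw [hc] at h'; linarith,
        fun h' => by rw [hc] at h'; linarith⟩
    · rw [if_neg (by linarith), if_neg (by linarith)] at hp hn
      norm_num at hp hn
      exact ⟨⟨by linarith, by linarith⟩, fun h' => by linarith, fun _ => by linarith⟩
  -- α is dual feasible
  have hαfeas1 : ∑ i, W i * α i = 0 := by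
    rw [← hsum0]; apply Finset.sum_congr rfl; intro i _; ring
  have h5 := hopt α hαfeas1 (fun i => (hfacts i).1)
  -- quadratic form equals squared norm
  have hQ : ∀ γ : Fin N → ℝ, ∑ i, ∑ j, γ i * (W i * W j * ⟪x i, x j⟫) * γ j
      = ‖∑ i, (γ i * W i) • x i‖ ^ 2 := by
    intro γ
    rw [← real_inner_self_eq_norm_sq]
    rw [sum_inner]
    apply Finset.sum_congr rfl
    intro i _
    rw [real_inner_smul_left, inner_sum, Finset.mul_sum]
    apply Finset.sum_congr rfl
    intro j _
    rw [real_inner_smul_right]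
    ring
  rw [hQ αs, hQ α] at h5
  set us : H := ∑ i, (αs i * W i) • x i with husdef
  set uα : H := ∑ i, (α i * W i) • x i with huαdef
  have huα : uα = lam • β := by
    rw [huαdef, hβdef, Finset.smul_sum]
    apply Finset.sum_congr rfl
    intro i _
    rw [hαW i, smul_smul, mul_div_assoc]
  have hβx : ∀ i, W i * ⟪β, x i⟫ = m i - W i * β₀ := by
    intro i; simp only [hmdef]; ring
  have hC : ∑ i, (αs i - α i) * W i = 0 := by
    have h1 : ∑ i, W i * αs i = 0 := hfeas.1
    have h2 : ∑ i, αs i * W i = 0 := by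
      rw [← h1]; apply Finset.sum_congr rfl; intro i _; ring
    simp only [sub_mul]
    rw [Finset.sum_sub_distrib, h2, hsum0, sub_zero]
  have hcross : ⟪uα, us - uα⟫ = lam * (∑ i, (αs i - α i) * (m i - 1))
      + lam * (∑ i, αs i) - lam * (∑ i, α i) := by
    have e0 : ⟪uα, us - uα⟫ = lam * (⟪β, us⟫ - ⟪β, uα⟫) := by
      rw [huα, real_inner_smul_left, inner_sub_right]
    have e1 : ⟪β, us⟫ = ∑ i, αs i * (W i * ⟪β, x i⟫) := by
      rw [husdef, inner_sum]
      exact Finset.sum_congr rfl (fun i _ => by rw [real_inner_smul_right]; ring)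
    have e2 : ⟪β, uα⟫ = ∑ i, α i * (W i * ⟪β, x i⟫) := by
      rw [huαdef, inner_sum]
      exact Finset.sum_congr rfl (fun i _ => by rw [real_inner_smul_right]; ring)
    rw [e0, e1, e2]
    have e3 : (∑ i, αs i * (W i * ⟪β, x i⟫)) - ∑ i, α i * (W i * ⟪β, x i⟫)
        = ∑ i, (αs i - α i) * (m i - W i * β₀) := by
      rw [← Finset.sum_sub_distrib]
      apply Finset.sum_congr rfl
      intro i _
      rw [← hβx i]
      ring
    rw [e3]
    have e4 : ∑ i, (αs i - α i) * (m i - W i * β₀)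
        = (∑ i, (αs i - α i) * (m i - 1)) + ((∑ i, αs i) - ∑ i, α i)
          - β₀ * ∑ i, (αs i - α i) * W i := by
      have e5 : ∀ i, (αs i - α i) * (m i - W i * β₀)
          = ((αs i - α i) * (m i - 1) + (αs i - α i)) - β₀ * ((αs i - α i) * W i) := by
        intro i; ring
      rw [Finset.sum_congr rfl (fun i _ => e5 i), Finset.sum_sub_distrib,
        Finset.sum_add_distrib, Finset.sum_sub_distrib, ← Finset.mul_sum]
    rw [e4, hC]
    ring
  have hterm : ∀ i, 0 ≤ (αs i - α i) * (m i - 1) := by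
    intro i
    rcases lt_trichotomy (m i) 1 with hc | hc | hc
    · have ha1 : α i = 1 := (hfacts i).2.1 hc
      have hs1 : αs i ≤ 1 := (hfeas.2 i).2
      nlinarith
    · rw [hc]; simp
    · have ha0 : α i = 0 := (hfacts i).2.2 hc
      have hs0 : 0 ≤ αs i := (hfeas.2 i).1
      nlinarith
  have hA : 0 ≤ ∑ i, (αs i - α i) * (m i - 1) :=
    Finset.sum_nonneg (fun i _ => hterm i)
  have hexp : ‖us‖ ^ 2 = ‖uα‖ ^ 2 + 2 * ⟪uα, us - uα⟫ + ‖us - uα‖ ^ 2 := by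
    have h0 : us = uα + (us - uα) := by abel
    calc ‖us‖ ^ 2 = ‖uα + (us - uα)‖ ^ 2 := by rw [← h0]
      _ = ‖uα‖ ^ 2 + 2 * ⟪uα, us - uα⟫ + ‖us - uα‖ ^ 2 := by rw [@norm_add_sq_real]
  have hnormsq : ‖us - uα‖ ^ 2 ≤ 0 := by
    have hlamA : 0 ≤ lam * ∑ i, (αs i - α i) * (m i - 1) := mul_nonneg hlam.le hA
    nlinarith [h5, hexp, hcross, hlamA]
  have hΔ0 : us - uα = 0 := by
    have h0 : ‖us - uα‖ = 0 := by nlinarith [norm_nonneg (us - uα), sq_nonneg ‖us - uα‖]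
    exact norm_eq_zero.mp h0
  have hsumeq : ∑ i, (αs i * W i - α i * W i) • x i = 0 := by
    have : ∑ i, (αs i * W i - α i * W i) • x i = us - uα := by
      rw [husdef, huαdef, ← Finset.sum_sub_distrib]
      apply Finset.sum_congr rfl
      intro i _
      rw [sub_smul]
    rw [this, hΔ0]
  have hcoef := Fintype.linearIndependent_iff.mp hli _ hsumeq
  intro j
  have hj := hcoef j
  have := hαW j
  linarith
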